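/- For any n ∈ ℤ, any field F of characteristic 0, any ε ∈ F with ε² = 1, and any choice of elements a_k ∈ F (k ∈ ℤ, |k − n| ≥ 2) and a_+, a_− ∈ F, setting a_{n−1} := 1, a_{n+1} := −1 and ǎ_k := 1 − a_k², the first vector field of the self-dual Toeplitz lattice admits a formal Laurent solution x(t) over F in which only x_n(t) has a pole (a simple one), with expansions: x_k(t) = ε(a_k + ǎ_k(a_{k+1} − a_{k−1})t + (1/2)ǎ_k(a_{k−2}ǎ_{k−1} + a_{k+2}ǎ_{k+1} − a_k((a_{k+1} − a_{k−1})² + 2 − 2a_{k−1}a_{k+1}) + κ_k)t² + O(t³)) for |k − n| ≥ 2, where κ_k = 0 for |k − n| > 2 and κ_{n±2} = ∓4a_±; x_{n±1}(t) = ε(∓1 + 4a_± t + 4a_±(2a_{n±2} ∓ (a_− + a_+))t² + O(t³)); and x_n(t) = −(ε/(2t))(1 + (a_+ − a_−)t + (1/3)((a_+ − a_−)² + 4(a_+a_{n+2} − a_−a_{n−2} + 1 − 2a_+a_−))t² + O(t³)). Moreover all higher coefficients of the solution are uniquely determined by the data ε, (a_k)_{|k−n|≥2}, a_+, a_−. 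-/

import Mathlib

/-!
Common definitions: the matrices `L₁`, `L₂` of the Toeplitz lattice, their powers,
the recursion polynomials `Γ_k` (here `GamA`), `Γ̃_k` (here `GamB`) and their
self-dual version (`GamSD`), together with the notion of formal Laurent
solutions of the (self-dual) Toeplitz lattice.
-/

noncomputable section

set_option linter.unusedSectionVars false
set_option linter.unusedTactic false
set_option maxHeartbeats 1000000


namespace SingConf

variable {A : Type*} [CommRing A]

/-- The entry `(L₁)_{ij} = -x_i y_{j-1} + δ_{i+1,j}` (for `j - i ≤ 1`, zero otherwise). -/
def L1e (x y : ℤ → A) (i j : ℤ) : A :=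
  if j ≤ i + 1 then -(x i * y (j - 1)) + (if i + 1 = j then 1 else 0) else 0

/-- The entry `(L₂)_{ij} = -y_j x_{i-1} + δ_{j+1,i}` (for `j - i ≥ -1`, zero otherwise). -/
def L2e (x y : ℤ → A) (i j : ℤ) : A :=
  if i ≤ j + 1 then -(y j * x (i - 1)) + (if j + 1 = i then 1 else 0) else 0

/-- The entry `(L₁^s)_{ij}`; the matrix `L₁` has upper bandwidth 1, so each entry of a
power is a finite sum. -/
def L1pow (x y : ℤ → A) : ℕ → ℤ → ℤ → A
  | 0 => fun i j => if i = j then 1 else 0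
  | s + 1 => fun i j => ∑ l ∈ Finset.Icc (j - 1) (i + (s : ℤ)), L1pow x y s i l * L1e x y l j

/-- The entry `(L₂^s)_{ij}`. -/
def L2pow (x y : ℤ → A) : ℕ → ℤ → ℤ → A
  | 0 => fun i j => if i = j then 1 else 0
  | s + 1 => fun i j => ∑ l ∈ Finset.Icc (i - (s : ℤ)) (j + 1), L2pow x y s i l * L2e x y l j

/-- The recursion polynomial
`Γ_k(x,y;u) = (v_k/y_k)(-(L₁P₁'(L₁))_{k+1,k+1} - (L₂P₂'(L₂))_{k,k}
              + (P₁'(L₁))_{k+1,k} + (P₂'(L₂))_{k,k+1}) + k x_k`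
where `P₁(λ) = ∑_{i=1}^N u_i λ^i/i`, `P₂(λ) = ∑_{i=1}^N u_{-i} λ^i/i`, `v_k = 1 - x_k y_k`.
The apparent denominator `y_k` cancels, thanks to the identities
`(L₁^{i-1})_{k+1,k} - (L₁^i)_{k+1,k+1} = y_k ∑_{l} x_l (L₁^{i-1})_{k+1,l}` and
`(L₂^{i-1})_{k,k+1} - (L₂^i)_{k,k} = y_k ∑_{l} x_{l-1} (L₂^{i-1})_{k,l}`,
which is how the cancellation-free expression below is obtained. -/
def GamA (N : ℕ) (u : ℤ → A) (x y : ℤ → A) (k : ℤ) : A :=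
  (1 - x k * y k) *
    ((∑ i ∈ Finset.Icc 1 N, u (i : ℤ) *
        ∑ l ∈ Finset.Icc k (k + (i : ℤ)), x l * L1pow x y (i - 1) (k + 1) l) +
      ∑ i ∈ Finset.Icc 1 N, u (-(i : ℤ)) *
        ∑ l ∈ Finset.Icc (k - (i : ℤ) + 1) (k + 1), x (l - 1) * L2pow x y (i - 1) k l) +
  (k : A) * x k

/-- The recursion polynomial
`Γ̃_k(x,y;u) = (v_k/x_k)(-(L₁P₁'(L₁))_{k,k} - (L₂P₂'(L₂))_{k+1,k+1}
              + (P₁'(L₁))_{k+1,k} + (P₂'(L₂))_{k,k+1}) + k y_k`,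
written in cancellation-free form using
`(L₁^{i-1})_{k+1,k} - (L₁^i)_{k,k} = x_k ∑_{l} y_{l-1} (L₁^{i-1})_{l,k}` and
`(L₂^{i-1})_{k,k+1} - (L₂^i)_{k+1,k+1} = x_k ∑_{l} y_l (L₂^{i-1})_{l,k+1}`. -/
def GamB (N : ℕ) (u : ℤ → A) (x y : ℤ → A) (k : ℤ) : A :=
  (1 - x k * y k) *
    ((∑ i ∈ Finset.Icc 1 N, u (i : ℤ) *
        ∑ l ∈ Finset.Icc (k - (i : ℤ) + 1) (k + 1), y (l - 1) * L1pow x y (i - 1) l k) +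
      ∑ i ∈ Finset.Icc 1 N, u (-(i : ℤ)) *
        ∑ l ∈ Finset.Icc k (k + (i : ℤ)), y l * L2pow x y (i - 1) l (k + 1)) +
  (k : A) * y k

/-- The self-dual recursion polynomial
`Γ_k(x;u) = (v_k/x_k)(2(P'(L))_{k+1,k} - (LP'(L))_{k+1,k+1} - (LP'(L))_{k,k}) + k x_k`
(where `L = L₁` with `y = x`, `v_k = 1 - x_k²`), in cancellation-free form. -/
def GamSD (N : ℕ) (u : ℕ → A) (x : ℤ → A) (k : ℤ) : A :=
  (1 - x k * x k) *
    (∑ i ∈ Finset.Icc 1 N, u i *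
      ((∑ l ∈ Finset.Icc k (k + (i : ℤ)), x l * L1pow x x (i - 1) (k + 1) l) +
        ∑ l ∈ Finset.Icc (k - (i : ℤ) + 1) (k + 1), x (l - 1) * L1pow x x (i - 1) l k)) +
  (k : A) * x k

variable {K : Type*} [Field K]

/-- `f(t) = O(t^m)` for a formal Laurent series. -/
def BigO (f : LaurentSeries K) (m : ℤ) : Prop := ∀ i < m, f.coeff i = 0

/-- A family `x(t) = (x_k(t))_{k ∈ ℤ}` of formal Laurent series is a solution of the first
vector field of the self-dual Toeplitz lattice: `dx_k/dt = (1 - x_k²)(x_{k+1} - x_{k-1})`;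
stated coefficientwise (the coefficient of `t^m` in `dx_k/dt` is `(m+1)·x_k^{(m+1)}`). -/
def IsSolSD (x : ℤ → LaurentSeries K) : Prop :=
  ∀ k m : ℤ, ((m + 1 : ℤ) : K) * (x k).coeff (m + 1) =
    ((1 - x k * x k) * (x (k + 1) - x (k - 1))).coeff m

/-- A family `(x_k(t), y_k(t))_{k ∈ ℤ}` of formal Laurent series is a solution of the first
Toeplitz vector field: `dx_k/dt = (1 - x_k y_k)(x_{k+1} - x_{k-1})`,
`dy_k/dt = (1 - x_k y_k)(y_{k+1} - y_{k-1})`. -/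
def IsSolT (x y : ℤ → LaurentSeries K) : Prop :=
  ∀ k m : ℤ,
    ((m + 1 : ℤ) : K) * (x k).coeff (m + 1) =
      ((1 - x k * y k) * (x (k + 1) - x (k - 1))).coeff m ∧
    ((m + 1 : ℤ) : K) * (y k).coeff (m + 1) =
      ((1 - x k * y k) * (y (k + 1) - y (k - 1))).coeff m

end SingConf

namespace SC

open Finset
variable {F : Type*} [Field F] [CharZero F]

lemma eps_cases {e : F} (he : e * e = 1) : e = 1 ∨ e = -1 := by
  have : (e - 1) * (e + 1) = 0 := by linear_combination he
  rcases mul_eq_zero.mp this with h | h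
  · left; linear_combination h
  · right; linear_combination h

/-- convolution of coefficient sequences -/
def cv (u v : ℕ → F) (m : ℕ) : F := ∑ j ∈ range (m+1), u j * v (m - j)

/-- coefficients of f_k^2 -/
def sq (d : ℕ → ℤ → F) (k : ℤ) (j : ℕ) : F := ∑ i ∈ range (j+1), d i k * d (j-i) k

/-- middle part of sq -/
def SS (d : ℕ → ℤ → F) (k : ℤ) (M : ℕ) : F := ∑ i ∈ Ioo 0 M, d i k * d (M-i) k

/-- coefficients of 1 - f_k^2 -/
def qq (d : ℕ → ℤ → F) (k : ℤ) (j : ℕ) : F := (if j = 0 then 1 else 0) - sq d k j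

lemma sq_top (d : ℕ → ℤ → F) (k : ℤ) {M : ℕ} (hM : 1 ≤ M) :
    sq d k M = 2 * d 0 k * d M k + SS d k M := by
  have h1 : range (M+1) = insert 0 (insert M (Ioo 0 M)) := by
    ext i; simp [Finset.mem_Ioo]; omega
  rw [sq, h1, Finset.sum_insert, Finset.sum_insert]
  · simp only [Nat.sub_self, Nat.sub_zero, SS]; ring
  · simp [Finset.mem_Ioo]
  · simp [Finset.mem_Ioo]; omega

variable (n : ℤ) (ε : F) (a : ℤ → F) (ap am : F)

def rA (d : ℕ → ℤ → F) (k : ℤ) (m : ℕ) : F :=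
  cv (qq d k) (fun i => d i (k+1) - d i (k-1)) m

def rB (d : ℕ → ℤ → F) (M : ℕ) : F :=
  (if 1 ≤ M then cv (qq d (n+1)) (fun i => d i (n+2)) (M-1) else 0)
    - cv (qq d (n+1)) (fun i => d i n) M

def rC (d : ℕ → ℤ → F) (M : ℕ) : F :=
  cv (qq d (n-1)) (fun i => d i n) M
    - (if 1 ≤ M then cv (qq d (n-1)) (fun i => d i (n-2)) (M-1) else 0)

def rD (d : ℕ → ℤ → F) (M : ℕ) : F :=
  (if 2 ≤ M then d (M-2) (n+1) - d (M-2) (n-1) else 0)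
    - cv (fun j => sq d n j) (fun i => d i (n+1) - d i (n-1)) M

/-- the coefficientwise equations -/
def EA (d : ℕ → ℤ → F) (k : ℤ) (m : ℕ) : Prop :=
  ((m:F)+1) * d (m+1) k = rA d k m
def EB (d : ℕ → ℤ → F) (M : ℕ) : Prop := (M:F) * d M (n+1) = rB n d M
def EC (d : ℕ → ℤ → F) (M : ℕ) : Prop := (M:F) * d M (n-1) = rC n d M
def ED (d : ℕ → ℤ → F) (M : ℕ) : Prop := ((M:F) - 1) * d M n = rD n d M

/-- remainder terms in solved form -/
def restB (d : ℕ → ℤ → F) (M : ℕ) : F :=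
  (if 1 ≤ M then cv (qq d (n+1)) (fun i => d i (n+2)) (M-1) else 0)
    - (∑ j ∈ Ioo 0 M, qq d (n+1) j * d (M-j) n) - (ε/2) * SS d (n+1) M

def restC (d : ℕ → ℤ → F) (M : ℕ) : F :=
  (∑ j ∈ Ioo 0 M, qq d (n-1) j * d (M-j) n) + (ε/2) * SS d (n-1) M
    - (if 1 ≤ M then cv (qq d (n-1)) (fun i => d i (n-2)) (M-1) else 0)

def restD (d : ℕ → ℤ → F) (M : ℕ) : F :=
  (if 2 ≤ M then d (M-2) (n+1) - d (M-2) (n-1) else 0)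
    - (∑ j ∈ range M, sq d n j * (d (M-j) (n+1) - d (M-j) (n-1)))
    - SS d n M * (d 0 (n+1) - d 0 (n-1))

/-- extraction lemmas -/
lemma exB (d : ℕ → ℤ → F) {M : ℕ} (hM : 1 ≤ M) (h1 : d 0 (n+1) = -ε)
    (h0 : d 0 n = -(ε/2)) (hε : ε * ε = 1) :
    rB n d M = d M (n+1) + restB n ε d M := by
  have hsplit : range (M+1) = insert 0 (insert M (Ioo 0 M)) := by
    ext i; simp [Finset.mem_Ioo]; omega
  have e1 : cv (qq d (n+1)) (fun i => d i n) M
      = ∑ j ∈ Ioo 0 M, qq d (n+1) j * d (M-j) n + (ε/2) * SS d (n+1) M - d M (n+1) := by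
    rw [cv, hsplit, Finset.sum_insert (by simp [Finset.mem_Ioo]; omega),
      Finset.sum_insert (by simp [Finset.mem_Ioo])]
    have hq0 : qq d (n+1) 0 = 0 := by
      simp [qq, sq, h1]; linear_combination -hε
    have hqM : qq d (n+1) M = 2 * ε * d M (n+1) - SS d (n+1) M := by
      rw [qq, sq_top d _ hM, h1]; have : ¬ (M = 0) := by omega
      simp [this]; ring
    simp only [Nat.sub_self, Nat.sub_zero]
    rw [hq0, hqM, h0]
    rcases eps_cases hε with rfl | rfl <;> push_cast <;> field_simp <;> ring
  rw [rB, restB, e1]; ring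

lemma exC (d : ℕ → ℤ → F) {M : ℕ} (hM : 1 ≤ M) (h1 : d 0 (n-1) = ε)
    (h0 : d 0 n = -(ε/2)) (hε : ε * ε = 1) :
    rC n d M = d M (n-1) + restC n ε d M := by
  have hsplit : range (M+1) = insert 0 (insert M (Ioo 0 M)) := by
    ext i; simp [Finset.mem_Ioo]; omega
  have e1 : cv (qq d (n-1)) (fun i => d i n) M
      = ∑ j ∈ Ioo 0 M, qq d (n-1) j * d (M-j) n + (ε/2) * SS d (n-1) M + d M (n-1) := by
    rw [cv, hsplit, Finset.sum_insert (by simp [Finset.mem_Ioo]; omega),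
      Finset.sum_insert (by simp [Finset.mem_Ioo])]
    have hq0 : qq d (n-1) 0 = 0 := by
      simp [qq, sq, h1]; linear_combination -hε
    have hqM : qq d (n-1) M = -2 * ε * d M (n-1) - SS d (n-1) M := by
      rw [qq, sq_top d _ hM, h1]; have : ¬ (M = 0) := by omega
      simp [this]; ring
    simp only [Nat.sub_self, Nat.sub_zero]
    rw [hq0, hqM, h0]
    rcases eps_cases hε with rfl | rfl <;> push_cast <;> field_simp <;> ring
  rw [rC, restC, e1]; ring

lemma exD (d : ℕ → ℤ → F) {M : ℕ} (hM : 1 ≤ M)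
    (h0 : d 0 n = -(ε/2)) (hg : d 0 (n+1) - d 0 (n-1) = -(2*ε)) (hε : ε * ε = 1) :
    rD n d M = -2 * d M n + restD n d M := by
  have e1 : cv (fun j => sq d n j) (fun i => d i (n+1) - d i (n-1)) M
      = ∑ j ∈ range M, sq d n j * (d (M-j) (n+1) - d (M-j) (n-1))
        + SS d n M * (d 0 (n+1) - d 0 (n-1)) + 2 * d M n := by
    rw [cv, Finset.sum_range_succ, sq_top d _ hM, h0]
    simp only [Nat.sub_self]
    rw [hg]
    rcases eps_cases hε with rfl | rfl <;> push_cast <;> field_simp <;> ring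
  rw [rD, restD, e1]; ring


/-! ### the canonical coefficient family -/

def AVal (d : ℕ → ℤ → F) (k : ℤ) (M : ℕ) : F := ((M:ℕ):F)⁻¹ * rA d k (M-1)
def BVal (d : ℕ → ℤ → F) (M : ℕ) : F :=
  if M = 1 then 4*ε*ap else (((M:ℕ):F) - 1)⁻¹ * restB n ε d M
def CVal (d : ℕ → ℤ → F) (M : ℕ) : F :=
  if M = 1 then 4*ε*am else (((M:ℕ):F) - 1)⁻¹ * restC n ε d M
def nextNonN (d : ℕ → ℤ → F) (M : ℕ) (k : ℤ) : F :=
  if k = n+1 then BVal n ε ap d M else if k = n-1 then CVal n ε am d M else AVal d k M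
def DVal (d : ℕ → ℤ → F) (M : ℕ) : F :=
  (((M:ℕ):F) + 1)⁻¹ *
    restD n (fun j k => if j = M then nextNonN n ε ap am d M k else d j k) M
def nextAll (d : ℕ → ℤ → F) (M : ℕ) (k : ℤ) : F :=
  if k = n then DVal n ε ap am d M else nextNonN n ε ap am d M k

def c0 (k : ℤ) : F := if k = n then -(ε/2) else ε * a k

def cs : ℕ → ℕ → ℤ → F
  | 0 => fun j k => if j = 0 then c0 n ε a k else 0
  | M+1 => fun j k => if j ≤ M then cs M j k else nextAll n ε ap am (cs M) (M+1) k

def cc (j : ℕ) (k : ℤ) : F := cs n ε a ap am j j k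

lemma cs_stable : ∀ M j, j ≤ M → ∀ k, cs n ε a ap am M j k = cc n ε a ap am j k := by
  intro M
  induction M with
  | zero => intro j hj k; interval_cases j; rfl
  | succ M ih =>
    intro j hj k
    rcases Nat.lt_or_ge j (M+1) with h | h
    · have hjM : j ≤ M := by omega
      show (if j ≤ M then _ else _) = _
      rw [if_pos hjM]; exact ih j hjM k
    · have : j = M + 1 := by omega
      subst this; rfl


/-! ### congruence lemmas -/

section congr
variable {p q : ℕ → ℤ → F}

lemma sq_congr {L : ℕ} (H : ∀ j k, j ≤ L → p j k = q j k) {k : ℤ} {j : ℕ} (hj : j ≤ L) :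
    sq p k j = sq q k j := by
  unfold sq; apply Finset.sum_congr rfl; intro i hi
  simp only [Finset.mem_range] at hi
  rw [H i k (by omega), H (j-i) k (by omega)]

lemma SS_congr {L : ℕ} (H : ∀ j k, j ≤ L → p j k = q j k) {k : ℤ} {M : ℕ} (hM : M ≤ L + 1) :
    SS p k M = SS q k M := by
  unfold SS; apply Finset.sum_congr rfl; intro i hi
  simp only [Finset.mem_Ioo] at hi
  rw [H i k (by omega), H (M-i) k (by omega)]

lemma qq_congr {L : ℕ} (H : ∀ j k, j ≤ L → p j k = q j k) {k : ℤ} {j : ℕ} (hj : j ≤ L) :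
    qq p k j = qq q k j := by
  unfold qq; rw [sq_congr H hj]

lemma rA_congr {L : ℕ} (H : ∀ j k, j ≤ L → p j k = q j k) {k : ℤ} {m : ℕ} (hm : m ≤ L) :
    rA p k m = rA q k m := by
  unfold rA cv; apply Finset.sum_congr rfl; intro i hi
  simp only [Finset.mem_range] at hi
  dsimp only
  rw [qq_congr H (by omega : i ≤ L), H (m-i) (k+1) (by omega), H (m-i) (k-1) (by omega)]

lemma restB_congr {L : ℕ} (H : ∀ j k, j ≤ L → p j k = q j k) {M : ℕ} (hM : M ≤ L + 1) :
    restB n ε p M = restB n ε q M := by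
  unfold restB cv
  congr 1
  · congr 1
    · split_ifs with h
      · apply Finset.sum_congr rfl; intro i hi
        simp only [Finset.mem_range] at hi
        try dsimp only
        rw [qq_congr H (by omega : i ≤ L), H (M-1-i) (n+2) (by omega)]
      · rfl
    · apply Finset.sum_congr rfl; intro i hi
      simp only [Finset.mem_Ioo] at hi
      rw [qq_congr H (by omega : i ≤ L), H (M-i) n (by omega)]
  · rw [SS_congr H hM]

lemma restC_congr {L : ℕ} (H : ∀ j k, j ≤ L → p j k = q j k) {M : ℕ} (hM : M ≤ L + 1) :
    restC n ε p M = restC n ε q M := by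
  unfold restC cv
  congr 1
  · congr 1
    · apply Finset.sum_congr rfl; intro i hi
      simp only [Finset.mem_Ioo] at hi
      rw [qq_congr H (by omega : i ≤ L), H (M-i) n (by omega)]
    · rw [SS_congr H hM]
  · split_ifs with h
    · apply Finset.sum_congr rfl; intro i hi
      simp only [Finset.mem_range] at hi
      try dsimp only
      rw [qq_congr H (by omega : i ≤ L), H (M-1-i) (n-2) (by omega)]
    · rfl

lemma restD_congr {M : ℕ} (hM : 1 ≤ M) (H : ∀ j k, j < M → p j k = q j k)
    (h1 : p M (n+1) = q M (n+1)) (h2 : p M (n-1) = q M (n-1)) :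
    restD n p M = restD n q M := by
  unfold restD
  congr 1
  · congr 1
    · split_ifs with h
      · rw [H (M-2) (n+1) (by omega), H (M-2) (n-1) (by omega)]
      · rfl
    · apply Finset.sum_congr rfl; intro i hi
      simp only [Finset.mem_range] at hi
      have hs : sq p n i = sq q n i := sq_congr (L := M - 1)
        (fun j k hj => H j k (by omega)) (by omega)
      rcases Nat.eq_zero_or_pos i with rfl | hpos
      · rw [hs]; simp only [Nat.sub_zero]; rw [h1, h2]
      · rw [hs, H (M-i) (n+1) (by omega), H (M-i) (n-1) (by omega)]
  · rw [SS_congr (L := M - 1) (fun j k hj => H j k (by omega)) (by omega),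
      H 0 (n+1) (by omega), H 0 (n-1) (by omega)]

end congr

/-! ### unfolding lemmas for `cc` -/

lemma cc_succ_raw (M : ℕ) (k : ℤ) :
    cc n ε a ap am (M+1) k = nextAll n ε ap am (cs n ε a ap am M) (M+1) k := by
  show (if M + 1 ≤ M then _ else _) = _
  rw [if_neg (by omega)]

lemma cc_B {M : ℕ} (hM : 1 ≤ M) :
    cc n ε a ap am M (n+1) = BVal n ε ap (cc n ε a ap am) M := by
  obtain ⟨M', rfl⟩ : ∃ M', M = M' + 1 := ⟨M - 1, by omega⟩
  rw [cc_succ_raw, nextAll, if_neg (by omega), nextNonN, if_pos rfl]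
  unfold BVal
  split_ifs with h
  · rfl
  · rw [restB_congr (L := M') n ε (fun j k hj => cs_stable n ε a ap am M' j hj k) (le_refl _)]

lemma cc_C {M : ℕ} (hM : 1 ≤ M) :
    cc n ε a ap am M (n-1) = CVal n ε am (cc n ε a ap am) M := by
  obtain ⟨M', rfl⟩ : ∃ M', M = M' + 1 := ⟨M - 1, by omega⟩
  rw [cc_succ_raw, nextAll, if_neg (by omega), nextNonN, if_neg (by omega), if_pos rfl]
  unfold CVal
  split_ifs with h
  · rfl
  · rw [restC_congr (L := M') n ε (fun j k hj => cs_stable n ε a ap am M' j hj k) (le_refl _)]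

lemma cc_A {M : ℕ} (hM : 1 ≤ M) {k : ℤ} (hk1 : k ≠ n) (hk2 : k ≠ n+1) (hk3 : k ≠ n-1) :
    cc n ε a ap am M k = AVal (cc n ε a ap am) k M := by
  obtain ⟨M', rfl⟩ : ∃ M', M = M' + 1 := ⟨M - 1, by omega⟩
  rw [cc_succ_raw, nextAll, if_neg hk1, nextNonN, if_neg hk2, if_neg hk3]
  unfold AVal
  rw [rA_congr (L := M') (fun j k hj => cs_stable n ε a ap am M' j hj k) (by omega)]

lemma cc_D {M : ℕ} (hM : 1 ≤ M) :
    cc n ε a ap am M n = ((M:F) + 1)⁻¹ * restD n (cc n ε a ap am) M := by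
  obtain ⟨M', rfl⟩ : ∃ M', M = M' + 1 := ⟨M - 1, by omega⟩
  rw [cc_succ_raw, nextAll, if_pos rfl]
  unfold DVal
  congr 1
  apply restD_congr n (by omega)
  · intro j k hj
    rw [if_neg (by omega)]
    exact cs_stable n ε a ap am M' j (by omega) k
  · rw [if_pos rfl]
    show nextNonN n ε ap am _ (M'+1) (n+1) = _
    rw [nextNonN, if_pos rfl, cc_B n ε a ap am (by omega : 1 ≤ M'+1)]
    unfold BVal
    split_ifs with h
    · rfl
    · rw [restB_congr (L := M') n ε (fun j k hj => cs_stable n ε a ap am M' j hj k) (le_refl _)]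
  · rw [if_pos rfl]
    show nextNonN n ε ap am _ (M'+1) (n-1) = _
    rw [nextNonN, if_neg (by omega), if_pos rfl, cc_C n ε a ap am (by omega : 1 ≤ M'+1)]
    unfold CVal
    split_ifs with h
    · rfl
    · rw [restC_congr (L := M') n ε (fun j k hj => cs_stable n ε a ap am M' j hj k) (le_refl _)]


/-! ### data values and equations for `cc` -/

section eqns

lemma cc_zero (k : ℤ) : cc n ε a ap am 0 k = c0 n ε a k := rfl

lemma cc0n : cc n ε a ap am 0 n = -(ε/2) := by rw [cc_zero, c0, if_pos rfl]

lemma cc0p (han2 : a (n+1) = -1) : cc n ε a ap am 0 (n+1) = -ε := by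
  rw [cc_zero, c0, if_neg (by omega), han2]; ring

lemma cc0m (han1 : a (n-1) = 1) : cc n ε a ap am 0 (n-1) = ε := by
  rw [cc_zero, c0, if_neg (by omega), han1]; ring

lemma cc0g {k : ℤ} (hk : k ≠ n) : cc n ε a ap am 0 k = ε * a k := by
  rw [cc_zero, c0, if_neg hk]

lemma qq0p (hε : ε * ε = 1) (han2 : a (n+1) = -1) : qq (cc n ε a ap am) (n+1) 0 = 0 := by
  simp [qq, sq, cc0p n ε a ap am han2]
  linear_combination -hε

lemma qq0m (hε : ε * ε = 1) (han1 : a (n-1) = 1) : qq (cc n ε a ap am) (n-1) 0 = 0 := by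
  simp [qq, sq, cc0m n ε a ap am han1]
  linear_combination -hε

lemma SS_zero (d : ℕ → ℤ → F) (k : ℤ) : SS d k 0 = 0 := by simp [SS]
lemma SS_one (d : ℕ → ℤ → F) (k : ℤ) : SS d k 1 = 0 := by
  rw [SS, show (Finset.Ioo 0 1 : Finset ℕ) = ∅ by decide, Finset.sum_empty]

lemma cc1p : cc n ε a ap am 1 (n+1) = 4*ε*ap := by
  rw [cc_B n ε a ap am (le_refl 1), BVal, if_pos rfl]

lemma cc1m : cc n ε a ap am 1 (n-1) = 4*ε*am := by
  rw [cc_C n ε a ap am (le_refl 1), CVal, if_pos rfl]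

lemma Mcast_ne {M : ℕ} (hM : 1 ≤ M) : ((M:ℕ):F) ≠ 0 :=
  Nat.cast_ne_zero.mpr (by omega)

lemma Mcast_sub_ne {M : ℕ} (hM : 2 ≤ M) : ((M:ℕ):F) - 1 ≠ 0 := by
  have h : (((M - 1 : ℕ):ℕ):F) ≠ 0 := Mcast_ne (by omega)
  rw [Nat.cast_sub (by omega : 1 ≤ M)] at h
  simpa using h

lemma Mcast_add_ne (M : ℕ) : ((M:ℕ):F) + 1 ≠ 0 := Nat.cast_add_one_ne_zero M

lemma EA_cc {k : ℤ} (hk1 : k ≠ n) (hk2 : k ≠ n+1) (hk3 : k ≠ n-1) (m : ℕ) :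
    EA (cc n ε a ap am) k m := by
  unfold EA
  rw [cc_A n ε a ap am (by omega : 1 ≤ m+1) hk1 hk2 hk3, AVal]
  simp only [Nat.add_sub_cancel]
  rw [show (((m+1:ℕ):ℕ):F) = (m:F)+1 by push_cast; ring, ← mul_assoc,
    mul_inv_cancel₀ (Nat.cast_add_one_ne_zero m), one_mul]

lemma EB_cc (hε : ε * ε = 1) (han2 : a (n+1) = -1) (M : ℕ) :
    EB n (cc n ε a ap am) M := by
  unfold EB
  rcases Nat.eq_zero_or_pos M with rfl | hM
  · rw [rB]
    simp only [Nat.cast_zero, zero_mul, if_neg (by omega : ¬ (1:ℕ) ≤ 0)]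
    rw [cv, Finset.sum_range_one]
    try dsimp only
    rw [qq0p n ε a ap am hε han2]
    ring
  · rw [exB n ε _ hM (cc0p n ε a ap am han2) (cc0n n ε a ap am) hε]
    rcases Nat.lt_or_ge M 2 with h2 | h2
    · have hM1 : M = 1 := by omega
      subst hM1
      rw [restB]
      simp only [if_pos (le_refl 1), Nat.sub_self]
      rw [cv, Finset.sum_range_one,
        show (Finset.Ioo 0 1 : Finset ℕ) = ∅ by decide, Finset.sum_empty,
        SS_one]
      try dsimp only
      rw [qq0p n ε a ap am hε han2]
      push_cast; ring
    · rw [cc_B n ε a ap am hM, BVal, if_neg (by omega)]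
      have hne : ((M:ℕ):F) - 1 ≠ 0 := Mcast_sub_ne h2
      field_simp
      ring

lemma EC_cc (hε : ε * ε = 1) (han1 : a (n-1) = 1) (M : ℕ) :
    EC n (cc n ε a ap am) M := by
  unfold EC
  rcases Nat.eq_zero_or_pos M with rfl | hM
  · rw [rC]
    simp only [Nat.cast_zero, zero_mul, if_neg (by omega : ¬ (1:ℕ) ≤ 0)]
    rw [cv, Finset.sum_range_one]
    try dsimp only
    rw [qq0m n ε a ap am hε han1]
    ring
  · rw [exC n ε _ hM (cc0m n ε a ap am han1) (cc0n n ε a ap am) hε]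
    rcases Nat.lt_or_ge M 2 with h2 | h2
    · have hM1 : M = 1 := by omega
      subst hM1
      rw [restC]
      simp only [if_pos (le_refl 1), Nat.sub_self]
      rw [cv, Finset.sum_range_one,
        show (Finset.Ioo 0 1 : Finset ℕ) = ∅ by decide, Finset.sum_empty,
        SS_one]
      try dsimp only
      rw [qq0m n ε a ap am hε han1]
      push_cast; ring
    · rw [cc_C n ε a ap am hM, CVal, if_neg (by omega)]
      have hne : ((M:ℕ):F) - 1 ≠ 0 := Mcast_sub_ne h2
      field_simp
      ring

lemma ED_cc (hε : ε * ε = 1) (han1 : a (n-1) = 1) (han2 : a (n+1) = -1) (M : ℕ) :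
    ED n (cc n ε a ap am) M := by
  unfold ED
  rcases Nat.eq_zero_or_pos M with rfl | hM
  · rw [rD]
    simp only [Nat.cast_zero, if_neg (by omega : ¬ (2:ℕ) ≤ 0)]
    rw [cv, Finset.sum_range_one]
    try dsimp only
    rw [sq, Finset.sum_range_one, cc0n n ε a ap am, cc0p n ε a ap am han2,
      cc0m n ε a ap am han1]
    rcases eps_cases hε with rfl | rfl <;> field_simp <;> ring
  · rw [exD n ε _ hM (cc0n n ε a ap am)
      (by rw [cc0p n ε a ap am han2, cc0m n ε a ap am han1]; ring) hε]
    have hD := cc_D n ε a ap am hM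
    have hne : ((M:ℕ):F) + 1 ≠ 0 := Mcast_add_ne M
    have hrD : restD n (cc n ε a ap am) M = ((M:F)+1) * cc n ε a ap am M n := by
      rw [hD]; field_simp
    rw [hrD]; ring

end eqns

/-! ### Laurent series tools -/

abbrev phi : PowerSeries F →+* LaurentSeries F := HahnSeries.ofPowerSeries ℤ F

lemma phi_coeff_neg (f : PowerSeries F) {m : ℤ} (h : m < 0) : (phi f).coeff m = 0 := by
  rw [HahnSeries.ofPowerSeries_apply, HahnSeries.embDomain_notin_range]
  rintro ⟨j, rfl⟩
  simp at h
  omega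

lemma phi_coeff_nonneg (f : PowerSeries F) {m : ℤ} (h : 0 ≤ m) :
    (phi f).coeff m = PowerSeries.coeff m.toNat f := by
  rw [show m = ((m.toNat : ℕ) : ℤ) by omega, HahnSeries.ofPowerSeries_apply_coeff]
  congr 1

lemma sig_mul_coeff {s : ℤ} (Y : LaurentSeries F) (m : ℤ) :
    ((HahnSeries.single (-s : ℤ) (1 : F)) * Y).coeff m = Y.coeff (m + s) := by
  have := HahnSeries.coeff_single_mul_add (r := (1:F)) (x := Y) (a := m + s) (b := (-s : ℤ))
  simp only [add_neg_cancel_right, one_mul] at this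
  exact this

def psr (d : ℕ → ℤ → F) (k : ℤ) : PowerSeries F := PowerSeries.mk fun j => d j k

lemma coeff_mul_range (A B : PowerSeries F) (M : ℕ) :
    PowerSeries.coeff M (A * B) =
      ∑ j ∈ Finset.range (M+1), PowerSeries.coeff j A * PowerSeries.coeff (M-j) B := by
  rw [PowerSeries.coeff_mul, Finset.Nat.sum_antidiagonal_eq_sum_range_succ_mk]

lemma coeff_one_sub_sq (d : ℕ → ℤ → F) (k : ℤ) (j : ℕ) :
    PowerSeries.coeff j (1 - psr d k * psr d k) = qq d k j := by
  rw [map_sub, coeff_mul_range, qq, sq, PowerSeries.coeff_one]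
  congr 1
  apply Finset.sum_congr rfl
  intro i _
  simp [psr]

lemma coeff_sq_n (d : ℕ → ℤ → F) (k : ℤ) (j : ℕ) :
    PowerSeries.coeff j (psr d k * psr d k) = sq d k j := by
  rw [coeff_mul_range, sq]
  apply Finset.sum_congr rfl
  intro i _
  simp [psr]

def XX (d : ℕ → ℤ → F) : ℤ → LaurentSeries F := fun k =>
  if k = n then HahnSeries.single (-1:ℤ) 1 * phi (psr d n) else phi (psr d k)

lemma XX_eq_ne (d : ℕ → ℤ → F) {k : ℤ} (hk : k ≠ n) : XX n d k = phi (psr d k) := by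
  rw [XX, if_neg hk]

lemma XX_eq_n (d : ℕ → ℤ → F) :
    XX n d n = HahnSeries.single (-1:ℤ) 1 * phi (psr d n) := by
  rw [XX, if_pos rfl]

lemma XX_coeff_ne (d : ℕ → ℤ → F) {k : ℤ} (hk : k ≠ n) (m : ℤ) :
    (XX n d k).coeff m = if 0 ≤ m then d m.toNat k else 0 := by
  rw [XX_eq_ne n d hk]
  split_ifs with h
  · rw [phi_coeff_nonneg _ h]; simp [psr]
  · exact phi_coeff_neg _ (by omega)

lemma XX_coeff_n (d : ℕ → ℤ → F) (m : ℤ) :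
    (XX n d n).coeff m = if -1 ≤ m then d (m+1).toNat n else 0 := by
  rw [XX_eq_n, show (-1:ℤ) = -(1:ℤ) by ring, sig_mul_coeff]
  split_ifs with h
  · rw [phi_coeff_nonneg _ (by omega)]; simp [psr]
  · exact phi_coeff_neg _ (by omega)

/-- coefficient of the RHS of the lattice equation at a generic site -/
lemma prod_generic (d : ℕ → ℤ → F) {k : ℤ} (h1 : k ≠ n) (h2 : k+1 ≠ n) (h3 : k-1 ≠ n)
    (m : ℤ) :
    ((1 - XX n d k * XX n d k) * (XX n d (k+1) - XX n d (k-1))).coeff m =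
      if 0 ≤ m then rA d k m.toNat else 0 := by
  rw [XX_eq_ne n d h1, XX_eq_ne n d h2, XX_eq_ne n d h3]
  rw [show (1 - phi (psr d k) * phi (psr d k)) * (phi (psr d (k+1)) - phi (psr d (k-1)))
      = phi ((1 - psr d k * psr d k) * (psr d (k+1) - psr d (k-1))) by
    simp only [map_mul phi, map_sub phi, map_one phi]]
  split_ifs with h
  · rw [phi_coeff_nonneg _ h, coeff_mul_range, rA, cv]
    apply Finset.sum_congr rfl
    intro i _
    rw [coeff_one_sub_sq, map_sub]
    simp [psr]
  · exact phi_coeff_neg _ (by omega)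

/-- coefficient of the RHS at site `n+1` -/
lemma prod_B (d : ℕ → ℤ → F) (m : ℤ) :
    ((1 - XX n d (n+1) * XX n d (n+1)) * (XX n d (n+1+1) - XX n d (n+1-1))).coeff m =
      (if 0 ≤ m then cv (qq d (n+1)) (fun i => d i (n+2)) m.toNat else 0)
      - (if 0 ≤ m + 1 then cv (qq d (n+1)) (fun i => d i n) (m+1).toNat else 0) := by
  rw [show n+1+1 = n+2 by ring, show n+1-1 = n by ring,
    XX_eq_ne n d (by omega), XX_eq_ne n d (by omega : n+2 ≠ n), XX_eq_n]
  rw [show (1 - phi (psr d (n+1)) * phi (psr d (n+1))) *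
        (phi (psr d (n+2)) - HahnSeries.single (-1:ℤ) 1 * phi (psr d n))
      = phi ((1 - psr d (n+1) * psr d (n+1)) * psr d (n+2))
        - HahnSeries.single (-1:ℤ) 1 *
          phi ((1 - psr d (n+1) * psr d (n+1)) * psr d n) by
    simp only [map_mul phi, map_sub phi, map_one phi]; ring]
  rw [HahnSeries.coeff_sub, show (-1:ℤ) = -(1:ℤ) by ring, sig_mul_coeff]
  congr 1
  · split_ifs with h
    · rw [phi_coeff_nonneg _ h, coeff_mul_range, cv]
      apply Finset.sum_congr rfl
      intro i _
      rw [coeff_one_sub_sq]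
      simp [psr]
    · exact phi_coeff_neg _ (by omega)
  · split_ifs with h
    · rw [phi_coeff_nonneg _ (by omega)]
      rw [coeff_mul_range, cv]
      apply Finset.sum_congr rfl
      intro i _
      rw [coeff_one_sub_sq]
      simp [psr]
    · exact phi_coeff_neg _ (by omega)

/-- coefficient of the RHS at site `n-1` -/
lemma prod_C (d : ℕ → ℤ → F) (m : ℤ) :
    ((1 - XX n d (n-1) * XX n d (n-1)) * (XX n d (n-1+1) - XX n d (n-1-1))).coeff m =
      (if 0 ≤ m + 1 then cv (qq d (n-1)) (fun i => d i n) (m+1).toNat else 0)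
      - (if 0 ≤ m then cv (qq d (n-1)) (fun i => d i (n-2)) m.toNat else 0) := by
  rw [show n-1+1 = n by ring, show n-1-1 = n-2 by ring,
    XX_eq_ne n d (by omega), XX_eq_ne n d (by omega : n-2 ≠ n), XX_eq_n]
  rw [show (1 - phi (psr d (n-1)) * phi (psr d (n-1))) *
        (HahnSeries.single (-1:ℤ) 1 * phi (psr d n) - phi (psr d (n-2)))
      = HahnSeries.single (-1:ℤ) 1 *
          phi ((1 - psr d (n-1) * psr d (n-1)) * psr d n)
        - phi ((1 - psr d (n-1) * psr d (n-1)) * psr d (n-2)) by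
    simp only [map_mul phi, map_sub phi, map_one phi]; ring]
  rw [HahnSeries.coeff_sub, show (-1:ℤ) = -(1:ℤ) by ring, sig_mul_coeff]
  congr 1
  · split_ifs with h
    · rw [phi_coeff_nonneg _ (by omega), coeff_mul_range, cv]
      apply Finset.sum_congr rfl
      intro i _
      rw [coeff_one_sub_sq]
      simp [psr]
    · exact phi_coeff_neg _ (by omega)
  · split_ifs with h
    · rw [phi_coeff_nonneg _ h, coeff_mul_range, cv]
      apply Finset.sum_congr rfl
      intro i _
      rw [coeff_one_sub_sq]
      simp [psr]
    · exact phi_coeff_neg _ (by omega)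

/-- coefficient of the RHS at site `n` -/
lemma prod_D (d : ℕ → ℤ → F) (m : ℤ) :
    ((1 - XX n d n * XX n d n) * (XX n d (n+1) - XX n d (n-1))).coeff m =
      (if 0 ≤ m then (d m.toNat (n+1) - d m.toNat (n-1)) else 0)
      - (if 0 ≤ m + 2 then
          cv (fun j => sq d n j) (fun i => d i (n+1) - d i (n-1)) (m+2).toNat else 0) := by
  rw [XX_eq_n, XX_eq_ne n d (by omega), XX_eq_ne n d (by omega)]
  have hσσ : HahnSeries.single (-1:ℤ) (1:F) * HahnSeries.single (-1:ℤ) (1:F)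
      = HahnSeries.single (-2:ℤ) (1:F) := by
    rw [HahnSeries.single_mul_single]; norm_num
  rw [show (1 - (HahnSeries.single (-1:ℤ) 1 * phi (psr d n)) *
          (HahnSeries.single (-1:ℤ) 1 * phi (psr d n))) *
        (phi (psr d (n+1)) - phi (psr d (n-1)))
      = phi (psr d (n+1) - psr d (n-1))
        - HahnSeries.single (-2:ℤ) 1 *
          phi (psr d n * psr d n * (psr d (n+1) - psr d (n-1))) by
    simp only [map_mul phi, map_sub phi]
    rw [← hσσ]; ring]
  rw [HahnSeries.coeff_sub, show (-2:ℤ) = -(2:ℤ) by ring, sig_mul_coeff]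
  congr 1
  · split_ifs with h
    · rw [phi_coeff_nonneg _ h, map_sub]; simp [psr]
    · exact phi_coeff_neg _ (by omega)
  · split_ifs with h
    · rw [phi_coeff_nonneg _ (by omega), coeff_mul_range, cv]
      apply Finset.sum_congr rfl
      intro i _
      rw [coeff_sq_n, map_sub]
      simp [psr]
    · exact phi_coeff_neg _ (by omega)


/-! ### equivalence of `IsSolSD` with the coefficient equations -/

lemma castToNat {m : ℤ} (h : 0 ≤ m) : ((m.toNat : ℕ) : F) = ((m : ℤ) : F) := by
  exact_mod_cast congrArg (fun z : ℤ => ((z : ℤ) : F)) (Int.toNat_of_nonneg h)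

lemma isSol_of_eqns (d : ℕ → ℤ → F)
    (hA : ∀ k, k ≠ n → k ≠ n+1 → k ≠ n-1 → ∀ m, EA d k m)
    (hB : ∀ M, EB n d M) (hC : ∀ M, EC n d M) (hD : ∀ M, ED n d M) :
    SingConf.IsSolSD (XX n d) := by
  intro k m
  rcases eq_or_ne k n with rfl | hkn
  · -- site n
    rw [prod_D, XX_coeff_n]
    rcases le_or_gt (-2 : ℤ) m with hm | hm
    · have hD' := hD (m+2).toNat
      rw [ED, rD] at hD'
      rw [if_pos (by omega : (-1:ℤ) ≤ m + 1),
        if_pos (by omega : (0:ℤ) ≤ m + 2)]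
      have e1 : ((m+2).toNat : F) - 1 = ((m+1 : ℤ) : F) := by
        rw [castToNat (by omega : (0:ℤ) ≤ m + 2)]; push_cast; ring
      have e2 : (m + 1 + 1).toNat = (m+2).toNat := by omega
      rw [e2, ← e1, hD']
      congr 1
      rcases le_or_gt 0 m with h0 | h0
      · rw [if_pos h0, if_pos (by omega : 2 ≤ (m+2).toNat)]
        congr 2 <;> omega
      · rw [if_neg (by omega), if_neg (by omega)]
    · rw [if_neg (show ¬ ((-1:ℤ) ≤ m + 1) by omega),
        if_neg (show ¬ ((0:ℤ) ≤ m) by omega),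
        if_neg (show ¬ ((0:ℤ) ≤ m + 2) by omega)]
      ring
  · rcases eq_or_ne k (n+1) with rfl | hkp
    · -- site n+1
      rw [prod_B, XX_coeff_ne n d hkn]
      rcases le_or_gt (-1 : ℤ) m with hm | hm
      · have hB' := hB (m+1).toNat
        rw [EB, rB] at hB'
        rw [if_pos (by omega : (0:ℤ) ≤ m + 1)]
        have e1 : (((m+1).toNat : ℕ) : F) = ((m+1 : ℤ) : F) :=
          castToNat (by omega : (0:ℤ) ≤ m + 1)
        rw [← e1, hB', if_pos (by omega : (0:ℤ) ≤ m + 1)]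
        congr 1
        rcases le_or_gt 0 m with h0 | h0
        · rw [if_pos h0, if_pos (by omega : 1 ≤ (m+1).toNat)]
          congr 1
          omega
        · rw [if_neg (by omega), if_neg (by omega)]
      · rw [if_neg (show ¬ ((0:ℤ) ≤ m + 1) by omega),
          if_neg (show ¬ ((0:ℤ) ≤ m) by omega),
          if_neg (show ¬ ((0:ℤ) ≤ m + 1) by omega)]
        ring
    · rcases eq_or_ne k (n-1) with rfl | hkm
      · -- site n-1
        rw [prod_C, XX_coeff_ne n d hkn]
        rcases le_or_gt (-1 : ℤ) m with hm | hm
        · have hC' := hC (m+1).toNat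
          rw [EC, rC] at hC'
          rw [if_pos (by omega : (0:ℤ) ≤ m + 1)]
          have e1 : (((m+1).toNat : ℕ) : F) = ((m+1 : ℤ) : F) :=
            castToNat (by omega : (0:ℤ) ≤ m + 1)
          rw [← e1, hC']
          rw [if_pos (by omega : (0:ℤ) ≤ m + 1)]
          congr 1
          rcases le_or_gt 0 m with h0 | h0
          · rw [if_pos h0, if_pos (by omega : 1 ≤ (m+1).toNat)]
            congr 1
            omega
          · rw [if_neg (by omega), if_neg (by omega)]
        · rw [if_neg (show ¬ ((0:ℤ) ≤ m + 1) by omega),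
            if_neg (show ¬ ((0:ℤ) ≤ m + 1) by omega),
            if_neg (show ¬ ((0:ℤ) ≤ m) by omega)]
          ring
      · -- generic site
        rw [prod_generic n d hkn (by omega) (by omega), XX_coeff_ne n d hkn]
        rcases le_or_gt 0 m with hm | hm
        · have hA' := hA k hkn hkp hkm m.toNat
          rw [EA] at hA'
          rw [if_pos hm, if_pos (by omega : (0:ℤ) ≤ m + 1)]
          have e1 : ((m.toNat : ℕ) : F) + 1 = ((m+1 : ℤ) : F) := by
            rw [castToNat hm]; push_cast; ring
          have e2 : (m+1).toNat = m.toNat + 1 := by omega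
          rw [e2, ← e1, hA']
        · rw [if_neg (show ¬ ((0:ℤ) ≤ m) by omega)]
          rcases eq_or_ne m (-1) with rfl | hne
          · norm_num
          · rw [if_neg (show ¬ ((0:ℤ) ≤ m + 1) by omega)]
            ring

lemma eqns_of_isSol (d : ℕ → ℤ → F) (h : SingConf.IsSolSD (XX n d)) :
    (∀ k, k ≠ n → k ≠ n+1 → k ≠ n-1 → ∀ m, EA d k m)
    ∧ (∀ M, EB n d M) ∧ (∀ M, EC n d M) ∧ (∀ M, ED n d M) := by
  refine ⟨?_, ?_, ?_, ?_⟩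
  · intro k h1 h2 h3 m
    have hc := h k (m : ℤ)
    rw [prod_generic n d h1 (by omega) (by omega), XX_coeff_ne n d h1,
      if_pos (by omega : (0:ℤ) ≤ (m:ℤ)), if_pos (by omega : (0:ℤ) ≤ (m:ℤ) + 1)] at hc
    rw [EA]
    have e1 : ((m : ℤ) + 1).toNat = m + 1 := by omega
    have e2 : ((m:ℤ)).toNat = m := by omega
    rw [e1, e2] at hc
    rw [show ((m:ℕ):F) + 1 = (((m:ℤ) + 1 : ℤ) : F) by push_cast; ring]
    exact hc
  · intro M
    have hc := h (n+1) ((M : ℤ) - 1)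
    rw [prod_B, XX_coeff_ne n d (by omega),
      if_pos (by omega : (0:ℤ) ≤ (M:ℤ) - 1 + 1),
      if_pos (by omega : (0:ℤ) ≤ (M:ℤ) - 1 + 1)] at hc
    have e1 : ((M:ℤ) - 1 + 1).toNat = M := by omega
    rw [e1, show (M:ℤ) - 1 + 1 = (M:ℤ) by ring,
      show (((M:ℤ)) : F) = ((M:ℕ):F) by push_cast; ring] at hc
    rw [EB, rB, hc]
    congr 1
    rcases le_or_gt 1 M with h1 | h1
    · rw [if_pos (show (0:ℤ) ≤ (M:ℤ) - 1 by omega), if_pos h1]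
      congr 1
      omega
    · rw [if_neg (show ¬ ((0:ℤ) ≤ (M:ℤ) - 1) by omega), if_neg (by omega)]
  · intro M
    have hc := h (n-1) ((M : ℤ) - 1)
    rw [prod_C, XX_coeff_ne n d (by omega),
      if_pos (by omega : (0:ℤ) ≤ (M:ℤ) - 1 + 1),
      if_pos (by omega : (0:ℤ) ≤ (M:ℤ) - 1 + 1)] at hc
    have e1 : ((M:ℤ) - 1 + 1).toNat = M := by omega
    rw [e1, show (M:ℤ) - 1 + 1 = (M:ℤ) by ring,
      show (((M:ℤ)) : F) = ((M:ℕ):F) by push_cast; ring] at hc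
    rw [EC, rC, hc]
    congr 1
    rcases le_or_gt 1 M with h1 | h1
    · rw [if_pos (show (0:ℤ) ≤ (M:ℤ) - 1 by omega), if_pos h1]
      congr 1
      omega
    · rw [if_neg (show ¬ ((0:ℤ) ≤ (M:ℤ) - 1) by omega), if_neg (by omega)]
  · intro M
    have hc := h n ((M : ℤ) - 2)
    rw [prod_D, XX_coeff_n,
      if_pos (by omega : (-1:ℤ) ≤ (M:ℤ) - 2 + 1),
      if_pos (by omega : (0:ℤ) ≤ (M:ℤ) - 2 + 2)] at hc
    have e1 : ((M:ℤ) - 2 + 1 + 1).toNat = M := by omega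
    have e2 : ((M:ℤ) - 2 + 2).toNat = M := by omega
    rw [e1, e2,
      show (((M:ℤ) - 2 + 1 : ℤ) : F) = ((M:ℕ):F) - 1 by push_cast; ring] at hc
    rw [ED, rD, hc]
    congr 1
    rcases le_or_gt 2 M with h1 | h1
    · rw [if_pos (show (0:ℤ) ≤ (M:ℤ) - 2 by omega), if_pos h1]
      congr 2 <;> omega
    · rw [if_neg (show ¬ ((0:ℤ) ≤ (M:ℤ) - 2) by omega), if_neg (by omega)]


/-! ### representation of Laurent series with poles of bounded order -/

lemma rep_of_bigO {Y : LaurentSeries F} (h : SingConf.BigO Y 0) :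
    Y = phi (PowerSeries.mk fun j => Y.coeff (j : ℤ)) := by
  ext m
  rcases le_or_gt 0 m with hm | hm
  · rw [phi_coeff_nonneg _ hm, PowerSeries.coeff_mk]
    congr 1
    omega
  · rw [phi_coeff_neg _ hm, h m hm]

lemma rep_of_bigO1 {Y : LaurentSeries F} (h : SingConf.BigO Y (-1)) :
    Y = HahnSeries.single (-1:ℤ) 1 *
      phi (PowerSeries.mk fun j => Y.coeff ((j : ℤ) - 1)) := by
  ext m
  rw [show (-1:ℤ) = -(1:ℤ) by ring, sig_mul_coeff]
  rcases le_or_gt (-1) m with hm | hm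
  · rw [phi_coeff_nonneg _ (by omega), PowerSeries.coeff_mk]
    congr 1
    omega
  · rw [phi_coeff_neg _ (by omega), h m hm]

/-! ### uniqueness of coefficient families -/

lemma unique_coeffs (hε : ε * ε = 1) (han1 : a (n-1) = 1) (han2 : a (n+1) = -1)
    (d : ℕ → ℤ → F)
    (hA : ∀ k, k ≠ n → k ≠ n+1 → k ≠ n-1 → ∀ m, EA d k m)
    (hB : ∀ M, EB n d M) (hC : ∀ M, EC n d M) (hD : ∀ M, ED n d M)
    (h0n : d 0 n = -(ε/2)) (h0p : d 0 (n+1) = -ε) (h0m : d 0 (n-1) = ε)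
    (h1p : d 1 (n+1) = 4*ε*ap) (h1m : d 1 (n-1) = 4*ε*am)
    (h0g : ∀ k, 2 ≤ |k - n| → d 0 k = ε * a k) :
    ∀ M k, d M k = cc n ε a ap am M k := by
  intro M
  induction M using Nat.strong_induction_on with
  | _ M IH =>
    rcases Nat.eq_zero_or_pos M with rfl | hM
    · intro k
      rcases eq_or_ne k n with rfl | hkn
      · rw [h0n, cc0n]
      rcases eq_or_ne k (n+1) with rfl | hkp
      · rw [h0p, cc0p n ε a ap am han2]
      rcases eq_or_ne k (n-1) with rfl | hkm
      · rw [h0m, cc0m n ε a ap am han1]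
      have habs : 2 ≤ |k - n| := le_abs.mpr (by omega)
      rw [h0g k habs, cc0g n ε a ap am hkn]
    · have IH' : ∀ j k', j ≤ M - 1 → d j k' = cc n ε a ap am j k' :=
        fun j k' hj => IH j (by omega) k'
      have hnn : ∀ k, k ≠ n → d M k = cc n ε a ap am M k := by
        intro k hkn
        rcases eq_or_ne k (n+1) with rfl | hkp
        · rcases eq_or_ne M 1 with rfl | hM1
          · rw [h1p, cc1p]
          · have h2 : 2 ≤ M := by omega
            have heq := hB M
            rw [EB, exB n ε d hM h0p h0n hε] at heq
            have hsolve : d M (n+1) = (((M:ℕ):F) - 1)⁻¹ * restB n ε d M := by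
              rw [eq_inv_mul_iff_mul_eq₀ (Mcast_sub_ne h2)]
              linear_combination heq
            rw [hsolve, restB_congr n ε (L := M - 1) IH' (by omega),
              cc_B n ε a ap am hM, BVal, if_neg hM1]
        rcases eq_or_ne k (n-1) with rfl | hkm
        · rcases eq_or_ne M 1 with rfl | hM1
          · rw [h1m, cc1m]
          · have h2 : 2 ≤ M := by omega
            have heq := hC M
            rw [EC, exC n ε d hM h0m h0n hε] at heq
            have hsolve : d M (n-1) = (((M:ℕ):F) - 1)⁻¹ * restC n ε d M := by
              rw [eq_inv_mul_iff_mul_eq₀ (Mcast_sub_ne h2)]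
              linear_combination heq
            rw [hsolve, restC_congr n ε (L := M - 1) IH' (by omega),
              cc_C n ε a ap am hM, CVal, if_neg hM1]
        · have heq := hA k hkn hkp hkm (M-1)
          rw [EA] at heq
          rw [show M - 1 + 1 = M by omega] at heq
          have hcast : ((M - 1 : ℕ) : F) + 1 = ((M:ℕ):F) := by
            rw [Nat.cast_sub (by omega : 1 ≤ M)]; push_cast; ring
          rw [hcast] at heq
          have hsolve : d M k = ((M:ℕ):F)⁻¹ * rA d k (M-1) := by
            rw [eq_inv_mul_iff_mul_eq₀ (Mcast_ne hM)]
            linear_combination heq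
          rw [hsolve, rA_congr (L := M - 1) IH' (le_refl _),
            cc_A n ε a ap am hM hkn hkp hkm, AVal]
      intro k
      rcases eq_or_ne k n with hk | hkn
      · rw [hk]
        have heq := hD M
        rw [ED, exD n ε d hM h0n (by rw [h0p, h0m]; ring) hε] at heq
        have hsolve : d M n = (((M:ℕ):F) + 1)⁻¹ * restD n d M := by
          rw [eq_inv_mul_iff_mul_eq₀ (Mcast_add_ne M)]
          linear_combination heq
        rw [hsolve,
          restD_congr n hM (fun j k' hj => IH j hj k')
            (hnn (n+1) (by omega)) (hnn (n-1) (by omega)),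
          cc_D n ε a ap am hM]
      · exact hnn k hkn


/-! ### small coefficient values -/

lemma cv0 (u v : ℕ → F) : cv u v 0 = u 0 * v 0 := by simp [cv]
lemma cv1 (u v : ℕ → F) : cv u v 1 = u 0 * v 1 + u 1 * v 0 := by
  rw [cv, Finset.sum_range_succ, Finset.sum_range_one]
lemma sq0 (d : ℕ → ℤ → F) (k : ℤ) : sq d k 0 = d 0 k * d 0 k := by simp [sq]
lemma sq1 (d : ℕ → ℤ → F) (k : ℤ) : sq d k 1 = d 0 k * d 1 k + d 1 k * d 0 k := by
  rw [sq, Finset.sum_range_succ, Finset.sum_range_one]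
lemma SS2 (d : ℕ → ℤ → F) (k : ℤ) : SS d k 2 = d 1 k * d 1 k := by
  rw [SS, show (Finset.Ioo 0 2 : Finset ℕ) = {1} by decide, Finset.sum_singleton]

lemma abs_ge2 {k : ℤ} (h : 2 ≤ |k - n|) : k ≤ n - 2 ∨ n + 2 ≤ k := by
  rcases abs_cases (k - n) with ⟨he, _⟩ | ⟨he, _⟩ <;> omega

section values

lemma ccv1 (hε : ε * ε = 1) {k : ℤ} (h : 2 ≤ |k - n|) :
    cc n ε a ap am 1 k = ε * ((1 - a k ^ 2) * (a (k+1) - a (k-1))) := by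
  have hk := abs_ge2 n h
  rw [cc_A n ε a ap am (le_refl 1) (by omega) (by omega) (by omega), AVal]
  rw [rA, cv0, qq, sq0, cc0g n ε a ap am (by omega), cc0g n ε a ap am (by omega),
    cc0g n ε a ap am (by omega), if_pos rfl,
    show (((1:ℕ)):F)⁻¹ = 1 by norm_num, one_mul]
  try simp only [Nat.sub_self]
  rcases eps_cases hε with rfl | rfl <;> try ring

lemma ccv1n (hε : ε * ε = 1) : cc n ε a ap am 1 n = -(ε/2) * (ap - am) := by
  rw [cc_D n ε a ap am (le_refl 1), restD]
  rw [if_neg (by omega : ¬ (2:ℕ) ≤ 1), Finset.sum_range_one, SS_one]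
  rw [sq0, cc0n, Nat.sub_zero, cc1p, cc1m,
    show (((1:ℕ)):F) + 1 = 2 by norm_num]
  have h2 : (2:F) ≠ 0 := two_ne_zero
  rcases eps_cases hε with rfl | rfl <;> field_simp <;> ring

lemma ccv2p (hε : ε * ε = 1) (han2 : a (n+1) = -1) :
    cc n ε a ap am 2 (n+1) = ε * (4 * ap * (2 * a (n+2) - (am + ap))) := by
  rw [cc_B n ε a ap am (by omega), BVal, if_neg (by omega), restB]
  rw [if_pos (by omega : (1:ℕ) ≤ 2), show (2:ℕ) - 1 = 1 by omega, cv1,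
    show (Finset.Ioo 0 2 : Finset ℕ) = {1} by decide, Finset.sum_singleton, SS2]
  rw [qq0p n ε a ap am hε han2]
  rw [qq, sq1, if_neg (by omega : ¬ (1:ℕ) = 0), cc0p n ε a ap am han2, cc1p,
    cc0g n ε a ap am (by omega : n+2 ≠ n),
    ccv1n n ε a ap am hε, show (((2:ℕ)):F) - 1 = 1 by norm_num, inv_one, one_mul]
  have h2 : (2:F) ≠ 0 := two_ne_zero
  rcases eps_cases hε with rfl | rfl <;> field_simp <;> ring

lemma ccv2m (hε : ε * ε = 1) (han1 : a (n-1) = 1) :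
    cc n ε a ap am 2 (n-1) = ε * (4 * am * (2 * a (n-2) + (am + ap))) := by
  rw [cc_C n ε a ap am (by omega), CVal, if_neg (by omega), restC]
  rw [if_pos (by omega : (1:ℕ) ≤ 2), show (2:ℕ) - 1 = 1 by omega, cv1,
    show (Finset.Ioo 0 2 : Finset ℕ) = {1} by decide, Finset.sum_singleton, SS2]
  rw [qq0m n ε a ap am hε han1]
  rw [qq, sq1, if_neg (by omega : ¬ (1:ℕ) = 0), cc0m n ε a ap am han1, cc1m,
    cc0g n ε a ap am (by omega : n-2 ≠ n),
    ccv1n n ε a ap am hε, show (((2:ℕ)):F) - 1 = 1 by norm_num, inv_one, one_mul]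
  have h2 : (2:F) ≠ 0 := two_ne_zero
  rcases eps_cases hε with rfl | rfl <;> field_simp <;> ring

lemma ccv2n (hε : ε * ε = 1) (han1 : a (n-1) = 1) (han2 : a (n+1) = -1) :
    cc n ε a ap am 2 n = -(ε/2) * ((1/3) * ((ap - am)^2 +
      4 * (ap * a (n+2) - am * a (n-2) + 1 - 2 * ap * am))) := by
  rw [cc_D n ε a ap am (by omega), restD]
  rw [if_pos (by omega : (2:ℕ) ≤ 2), Finset.sum_range_succ, Finset.sum_range_one, SS2]
  rw [sq0, sq1, cc0n, cc0p n ε a ap am han2, cc0m n ε a ap am han1]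
  simp only [Nat.sub_zero, Nat.sub_self, show (2:ℕ) - 1 = 1 by omega]
  rw [cc1p, cc1m, ccv1n n ε a ap am hε, ccv2p n ε a ap am hε han2,
    ccv2m n ε a ap am hε han1, show (((2:ℕ)):F) + 1 = 3 by norm_num]
  have h2 : (2:F) ≠ 0 := two_ne_zero
  have h3 : (3:F) ≠ 0 := three_ne_zero
  rcases eps_cases hε with rfl | rfl <;> field_simp <;> ring

lemma ccv2g (hε : ε * ε = 1) (han1 : a (n-1) = 1) (han2 : a (n+1) = -1)
    {k : ℤ} (h : 2 ≤ |k - n|) :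
    cc n ε a ap am 2 k = ε * ((1 / 2) * (1 - a k ^ 2) *
      (a (k - 2) * (1 - a (k - 1) ^ 2) + a (k + 2) * (1 - a (k + 1) ^ 2)
        - a k * ((a (k + 1) - a (k - 1)) ^ 2 + 2 - 2 * a (k - 1) * a (k + 1))
        + (if k = n + 2 then -(4 * ap) else if k = n - 2 then 4 * am else 0))) := by
  have hk := abs_ge2 n h
  have h2 : (2:F) ≠ 0 := two_ne_zero
  rw [cc_A n ε a ap am (by omega) (by omega) (by omega) (by omega), AVal,
    show (2:ℕ) - 1 = 1 by omega, rA, cv1, qq, qq, sq0, sq1,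
    if_pos rfl, if_neg (by omega : ¬ (1:ℕ) = 0)]
  try simp only [Nat.sub_zero, Nat.sub_self]
  rw [cc0g n ε a ap am (by omega), cc0g n ε a ap am (by omega),
    cc0g n ε a ap am (by omega), ccv1 n ε a ap am hε h]
  rcases eq_or_ne k (n+2) with rfl | hk2
  · rw [if_pos rfl]
    rw [show n+2-1 = n+1 by ring, show n+2+1 = n+3 by ring, cc1p,
      ccv1 n ε a ap am hε (by rw [show n+3-n = 3 by ring]; norm_num),
      show n+3+1 = n+4 by ring, show n+3-1 = n+2 by ring,
      show n+2-2 = n by ring, han2]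
    rcases eps_cases hε with rfl | rfl <;> field_simp <;> ring
  · rcases eq_or_ne k (n-2) with rfl | hk3
    · rw [if_neg hk2, if_pos rfl]
      rw [show n-2+1 = n-1 by ring, show n-2-1 = n-3 by ring, cc1m,
        ccv1 n ε a ap am hε (by rw [show n-3-n = -3 by ring]; norm_num),
        show n-3+1 = n-2 by ring, show n-3-1 = n-4 by ring,
        show n-2+2 = n by ring, han1]
      rcases eps_cases hε with rfl | rfl <;> field_simp <;> ring
    · rw [if_neg hk2, if_neg hk3]
      rw [ccv1 n ε a ap am hε (show 2 ≤ |k+1 - n| by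
          rcases hk with h' | h'
          · exact le_abs.mpr (Or.inr (by omega))
          · exact le_abs.mpr (Or.inl (by omega))),
        ccv1 n ε a ap am hε (show 2 ≤ |k-1 - n| by
          rcases hk with h' | h'
          · exact le_abs.mpr (Or.inr (by omega))
          · exact le_abs.mpr (Or.inl (by omega)))]
      rw [show k+1+1 = k+2 by ring, show k+1-1 = k by ring,
        show k-1+1 = k by ring, show k-1-1 = k-2 by ring]
      rcases eps_cases hε with rfl | rfl <;> field_simp <;> ring

end values


end SC

open SingConf SC


/-- For any `n ∈ ℤ`, any field `F` of characteristic `0`, any `ε ∈ F` with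
`ε² = 1`, and any choice of elements `a_k ∈ F` (`|k - n| ≥ 2`, encoded as a function
`a : ℤ → F` with the conventions `a_{n-1} = 1`, `a_{n+1} = -1`; the value `a n` is never
used) and `a₊, a₋ ∈ F`, the first vector field of the self-dual Toeplitz lattice admits a
formal Laurent solution `x(t)` in which only `x_n(t)` has a (simple) pole, with the stated
expansions up to `O(t³)`; all higher coefficients are uniquely determined by the data. -/
theorem statement2 (F : Type*) [Field F] [CharZero F] (n : ℤ) (ε : F) (hε : ε ^ 2 = 1)
    (a : ℤ → F) (han1 : a (n - 1) = 1) (han2 : a (n + 1) = -1) (ap am : F) :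
    ∃ x : ℤ → LaurentSeries F,
      -- the data characterizing the solution:
      (IsSolSD x ∧
        (∀ k, k ≠ n → BigO (x k) 0) ∧
        BigO (x n) (-1) ∧ (x n).coeff (-1) = -ε / 2 ∧
        (x (n + 1)).coeff 0 = -ε ∧ (x (n - 1)).coeff 0 = ε ∧
        (x (n + 1)).coeff 1 = 4 * ε * ap ∧ (x (n - 1)).coeff 1 = 4 * ε * am ∧
        (∀ k, 2 ≤ |k - n| → (x k).coeff 0 = ε * a k)) ∧
      -- the further displayed coefficients of the expansions:
      ((∀ k, 2 ≤ |k - n| →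
          (x k).coeff 1 = ε * ((1 - a k ^ 2) * (a (k + 1) - a (k - 1))) ∧
          (x k).coeff 2 = ε * ((1 / 2) * (1 - a k ^ 2) *
            (a (k - 2) * (1 - a (k - 1) ^ 2) + a (k + 2) * (1 - a (k + 1) ^ 2)
              - a k * ((a (k + 1) - a (k - 1)) ^ 2 + 2 - 2 * a (k - 1) * a (k + 1))
              + (if k = n + 2 then -(4 * ap) else if k = n - 2 then 4 * am else 0)))) ∧
        (x (n + 1)).coeff 2 = ε * (4 * ap * (2 * a (n + 2) - (am + ap))) ∧
        (x (n - 1)).coeff 2 = ε * (4 * am * (2 * a (n - 2) + (am + ap))) ∧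
        (x n).coeff 0 = -(ε / 2) * (ap - am) ∧
        (x n).coeff 1 = -(ε / 2) * ((1 / 3) * ((ap - am) ^ 2 +
          4 * (ap * a (n + 2) - am * a (n - 2) + 1 - 2 * ap * am)))) ∧
      -- uniqueness: any formal Laurent solution with the same characterizing data coincides
      -- with `x`:
      (∀ x' : ℤ → LaurentSeries F,
        (IsSolSD x' ∧
          (∀ k, k ≠ n → BigO (x' k) 0) ∧
          BigO (x' n) (-1) ∧ (x' n).coeff (-1) = -ε / 2 ∧
          (x' (n + 1)).coeff 0 = -ε ∧ (x' (n - 1)).coeff 0 = ε ∧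
          (x' (n + 1)).coeff 1 = 4 * ε * ap ∧ (x' (n - 1)).coeff 1 = 4 * ε * am ∧
          (∀ k, 2 ≤ |k - n| → (x' k).coeff 0 = ε * a k)) → x' = x) := by
  have hε' : ε * ε = 1 := by rw [← pow_two]; exact hε
  refine ⟨XX n (cc n ε a ap am), ⟨?_, ?_, ?_, ?_, ?_, ?_, ?_, ?_, ?_⟩,
    ⟨?_, ?_, ?_, ?_, ?_⟩, ?_⟩
  · exact isSol_of_eqns n _ (fun k h1 h2 h3 m => EA_cc n ε a ap am h1 h2 h3 m)
      (EB_cc n ε a ap am hε' han2) (EC_cc n ε a ap am hε' han1)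
      (ED_cc n ε a ap am hε' han1 han2)
  · intro k hk i hi
    rw [XX_coeff_ne n _ hk, if_neg (by omega)]
  · intro i hi
    rw [XX_coeff_n, if_neg (by omega)]
  · rw [XX_coeff_n, if_pos (by norm_num), show ((-1:ℤ)+1).toNat = 0 by decide, cc0n]
    ring
  · rw [XX_coeff_ne n _ (by omega : n+1 ≠ n), if_pos (by norm_num),
      show ((0:ℤ)).toNat = 0 by decide, cc0p n ε a ap am han2]
  · rw [XX_coeff_ne n _ (by omega : n-1 ≠ n), if_pos (by norm_num),
      show ((0:ℤ)).toNat = 0 by decide, cc0m n ε a ap am han1]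
  · rw [XX_coeff_ne n _ (by omega : n+1 ≠ n), if_pos (by norm_num),
      show ((1:ℤ)).toNat = 1 by decide, cc1p]
  · rw [XX_coeff_ne n _ (by omega : n-1 ≠ n), if_pos (by norm_num),
      show ((1:ℤ)).toNat = 1 by decide, cc1m]
  · intro k hk
    have hk' := abs_ge2 n hk
    rw [XX_coeff_ne n _ (by omega : k ≠ n), if_pos (by norm_num),
      show ((0:ℤ)).toNat = 0 by decide, cc0g n ε a ap am (by omega)]
  · intro k hk
    have hk' := abs_ge2 n hk
    constructor
    · rw [XX_coeff_ne n _ (by omega : k ≠ n), if_pos (by norm_num),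
        show ((1:ℤ)).toNat = 1 by decide, ccv1 n ε a ap am hε' hk]
    · rw [XX_coeff_ne n _ (by omega : k ≠ n), if_pos (by norm_num),
        show ((2:ℤ)).toNat = 2 by decide, ccv2g n ε a ap am hε' han1 han2 hk]
  · rw [XX_coeff_ne n _ (by omega : n+1 ≠ n), if_pos (by norm_num),
      show ((2:ℤ)).toNat = 2 by decide, ccv2p n ε a ap am hε' han2]
  · rw [XX_coeff_ne n _ (by omega : n-1 ≠ n), if_pos (by norm_num),
      show ((2:ℤ)).toNat = 2 by decide, ccv2m n ε a ap am hε' han1]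
  · rw [XX_coeff_n, if_pos (by norm_num), show ((0:ℤ)+1).toNat = 1 by decide,
      ccv1n n ε a ap am hε']
  · rw [XX_coeff_n, if_pos (by norm_num), show ((1:ℤ)+1).toNat = 2 by decide,
      ccv2n n ε a ap am hε' han1 han2]
  · rintro x' ⟨hsol, hO, hOn, hcm1, hc0p, hc0m, hc1p, hc1m, hc0g⟩
    set d' : ℕ → ℤ → F := fun j k =>
      if k = n then (x' n).coeff ((j : ℤ) - 1) else (x' k).coeff (j : ℤ) with hd'
    have hrep : ∀ k, x' k = XX n d' k := by
      intro k
      rcases eq_or_ne k n with rfl | hk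
      · rw [XX, if_pos rfl]
        have : psr d' k = PowerSeries.mk fun j => (x' k).coeff ((j : ℤ) - 1) := by
          unfold psr
          exact congrArg PowerSeries.mk (funext fun j => by simp [hd'])
        rw [this]
        exact rep_of_bigO1 hOn
      · rw [XX_eq_ne n d' hk]
        have : psr d' k = PowerSeries.mk fun j => (x' k).coeff (j : ℤ) := by
          unfold psr
          exact congrArg PowerSeries.mk (funext fun j => by simp [hd', hk])
        rw [this]
        exact rep_of_bigO (hO k hk)
    have hsol' : SingConf.IsSolSD (XX n d') := by
      have : XX n d' = x' := funext fun k => (hrep k).symm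
      rw [this]
      exact hsol
    obtain ⟨hA, hB, hC, hD⟩ := eqns_of_isSol n d' hsol'
    have hdc : ∀ M k, d' M k = cc n ε a ap am M k := by
      apply unique_coeffs n ε a ap am hε' han1 han2 d' hA hB hC hD
      · show (if n = n then _ else _) = _
        rw [if_pos rfl, show ((0:ℕ):ℤ) - 1 = (-1:ℤ) by norm_num, hcm1]
        ring
      · show (if n + 1 = n then _ else _) = _
        rw [if_neg (by omega)]
        exact_mod_cast hc0p
      · show (if n - 1 = n then _ else _) = _
        rw [if_neg (by omega)]
        exact_mod_cast hc0m
      · show (if n + 1 = n then _ else _) = _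
        rw [if_neg (by omega)]
        exact_mod_cast hc1p
      · show (if n - 1 = n then _ else _) = _
        rw [if_neg (by omega)]
        exact_mod_cast hc1m
      · intro k hk
        have hk' := abs_ge2 n hk
        show (if k = n then _ else _) = _
        rw [if_neg (by omega)]
        exact_mod_cast hc0g k hk
    have hdc' : d' = cc n ε a ap am := funext fun M => funext fun k => hdc M k
    funext k
    rw [hrep k, hdc']
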